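/- arXiv:1205.0797 — 2 statements merged into one kernel-verified Lean document; each statement's English description precedes it below -/
import Mathlib

section
/- If φ : u_n → u_n is an injective Lie algebra homomorphism, then φ(∂₁) = λ∂₁ + u for some λ ∈ K* and u ∈ u_{n,2}; i.e., the image of u_n under φ is not contained in the derived subalgebra u_{n,2} = [u_n, u_n]. -/
open MvPolynomial

set_option linter.unusedVariables false
set_option linter.unusedSectionVars false
set_option maxHeartbeats 1000000
noncomputable section

/-- The polynomial algebra `Pₙ = K[x₀,…,x_{n-1}]`. -/
abbrev Pn (K : Type) [Field K] (n : ℕ) : Type := MvPolynomial (Fin n) K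

/-- The Lie algebra of `K`-derivations of `Pₙ`. -/
abbrev DerPn (K : Type) [Field K] (n : ℕ) : Type :=
  Derivation K (Pn K n) (Pn K n)

/-- The subalgebra `P_j = K[x₀,…,x_{j-1}]` of `Pₙ` (0-indexed: variables with index `< j`). -/
def Psub (K : Type) [Field K] (n j : ℕ) : Subalgebra K (Pn K n) :=
  MvPolynomial.supported K {k : Fin n | (k : ℕ) < j}

/-- The subspace `u_{n,i} = Σ_{j=i}^n P_{j-1}∂_j` (1-indexed `i`; `U K n 1 = u_n`).
A derivation `D` lies in it iff `D(x_j) ∈ P_{j-1}` for all `j` and `D(x_j) = 0` for `j < i`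
(0-indexed: `D (X j) = 0` when `(j:ℕ)+1 < i`). -/
def U (K : Type) [Field K] (n i : ℕ) : Submodule K (DerPn K n) where
  carrier := {D | ∀ j : Fin n, D (X j) ∈ Psub K n j ∧ ((j : ℕ) + 1 < i → D (X j) = 0)}
  add_mem' := by
    intro a b ha hb j
    refine ⟨?_, fun h => ?_⟩
    · simpa using Subalgebra.add_mem _ (ha j).1 (hb j).1
    · simp [(ha j).2 h, (hb j).2 h]
  zero_mem' := by
    intro j
    refine ⟨by simpa using (Psub K n j).zero_mem, fun _ => rfl⟩
  smul_mem' := by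
    intro c a ha j
    refine ⟨?_, fun h => ?_⟩
    · simpa using Subalgebra.smul_mem _ (ha j).1 c
    · simp [(ha j).2 h]

/-- The span of all brackets `⁅a,b⁆` with `a ∈ A`, `b ∈ B`. -/
def lieSpan (K : Type) [Field K] (n : ℕ) (A B : Submodule K (DerPn K n)) :
    Submodule K (DerPn K n) :=
  Submodule.span K {x | ∃ a ∈ A, ∃ b ∈ B, x = ⁅a, b⁆}

/-- The derived series of a subspace `G`: `G_{(0)} = G`, `G_{(i+1)} = [G_{(i)}, G_{(i)}]`. -/
def derivedSub (K : Type) [Field K] (n : ℕ) (G : Submodule K (DerPn K n)) : ℕ → Submodule K (DerPn K n)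
  | 0 => G
  | i + 1 => lieSpan K n (derivedSub K n G i) (derivedSub K n G i)

variable {K : Type} [Field K] [CharZero K] {n : ℕ}

lemma Psub_mono {i j : ℕ} (h : i ≤ j) : Psub K n i ≤ Psub K n j :=
  supported_mono (fun k hk => lt_of_lt_of_le hk h)

lemma deriv_mem_Psub (a : DerPn K n) (j : ℕ)
    (h1 : ∀ m : Fin n, (m : ℕ) < j → a (X m) ∈ Psub K n j)
    {p : Pn K n} (hp : p ∈ Psub K n j) : a p ∈ Psub K n j := by
  induction hp using Algebra.adjoin_induction with
  | mem x hx =>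
      obtain ⟨m, hm, rfl⟩ := hx
      exact h1 m hm
  | algebraMap r => simpa [Derivation.map_algebraMap] using (Psub K n j).zero_mem
  | add x y hx hy ihx ihy => simpa using Subalgebra.add_mem _ ihx ihy
  | mul x y hx hy ihx ihy =>
      rw [Derivation.leibniz]
      exact Subalgebra.add_mem _
        (by simpa [smul_eq_mul] using Subalgebra.mul_mem (Psub K n j) hx ihy)
        (by simpa [smul_eq_mul] using Subalgebra.mul_mem (Psub K n j) hy ihx)

lemma deriv_zero_Psub (a : DerPn K n) (j : ℕ)
    (h1 : ∀ m : Fin n, (m : ℕ) < j → a (X m) = 0)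
    {p : Pn K n} (hp : p ∈ Psub K n j) : a p = 0 := by
  induction hp using Algebra.adjoin_induction with
  | mem x hx =>
      obtain ⟨m, hm, rfl⟩ := hx
      exact h1 m hm
  | algebraMap r => simp [Derivation.map_algebraMap]
  | add x y hx hy ihx ihy => simp [ihx, ihy]
  | mul x y hx hy ihx ihy => rw [Derivation.leibniz, ihx, ihy]; simp


lemma U_mono {i i' : ℕ} (h : i ≤ i') : U K n i' ≤ U K n i := by
  intro a ha j
  exact ⟨(ha j).1, fun hj => (ha j).2 (lt_of_lt_of_le hj h)⟩

lemma bracket_mem_U {i : ℕ} {a b : DerPn K n} (ha : a ∈ U K n i) (hb : b ∈ U K n i) :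
    ⁅a, b⁆ ∈ U K n (i + 1) := by
  intro j
  have hmem : ∀ (c d : DerPn K n), c ∈ U K n i → d ∈ U K n i → c (d (X j)) ∈ Psub K n (j : ℕ) :=
    fun c d hc hd => deriv_mem_Psub c j
      (fun m hm => Psub_mono (le_of_lt hm) (hc m).1) (hd j).1
  constructor
  · rw [Derivation.commutator_apply]
    exact Subalgebra.sub_mem _ (hmem a b ha hb) (hmem b a hb ha)
  · intro hj
    have hj' : (j : ℕ) + 1 ≤ i := Nat.lt_succ_iff.mp hj
    have hz : ∀ (c d : DerPn K n), c ∈ U K n i → d ∈ U K n i → c (d (X j)) = 0 := by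
      intro c d hc hd
      exact deriv_zero_Psub c j
        (fun m hm => (hc m).2 (lt_of_le_of_lt (Nat.succ_le_of_lt hm) (lt_of_lt_of_le (Nat.lt_of_lt_of_le (Nat.lt_succ_self _) hj') (le_refl _))))
        (hd j).1
    rw [Derivation.commutator_apply, hz a b ha hb, hz b a hb ha, sub_zero]

lemma lieSpan_le_U {i : ℕ} {A B : Submodule K (DerPn K n)} (hA : A ≤ U K n i)
    (hB : B ≤ U K n i) : lieSpan K n A B ≤ U K n (i + 1) := by
  rw [lieSpan, Submodule.span_le]
  rintro x ⟨a, ha, b, hb, rfl⟩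
  exact bracket_mem_U (hA ha) (hB hb)

lemma derivedSub_le_U {i : ℕ} {G : Submodule K (DerPn K n)} (hG : G ≤ U K n i) :
    ∀ k, derivedSub K n G k ≤ U K n (i + k)
  | 0 => hG
  | (k + 1) => by
      have := derivedSub_le_U hG k
      exact le_trans (lieSpan_le_U this this) (le_of_eq (by ring_nf))

lemma eq_zero_of_mem_U {D : DerPn K n} (hD : D ∈ U K n (n + 1)) : D = 0 := by
  apply derivation_ext
  intro j
  simpa using (hD j).2 (by omega)

lemma smul_pderiv_apply (f : Pn K n) (b : Fin n) (p : Pn K n) :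
    (f • (pderiv b : DerPn K n)) p = f * pderiv b p := rfl

lemma bracket_pderiv_smul (a b : Fin n) (f : Pn K n) :
    ⁅(pderiv a : DerPn K n), f • (pderiv b : DerPn K n)⁆ = (pderiv a f) • (pderiv b : DerPn K n) := by
  apply derivation_ext
  intro j
  simp only [Derivation.commutator_apply, Derivation.smul_apply, smul_eq_mul]
  by_cases h : b = j
  · subst h
    rw [pderiv_X_self, mul_one, mul_one]
    by_cases h2 : b = a
    · subst h2; rw [pderiv_X_self]; simp
    · rw [pderiv_X_of_ne h2]; simp
  · rw [pderiv_X_of_ne (fun hh => h hh.symm), mul_zero, mul_zero]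
    by_cases h2 : j = a
    · subst h2; rw [pderiv_X_self]; simp
    · rw [pderiv_X_of_ne h2]; simp

/-- Antiderivative with respect to variable `k`. -/
def antid (k : Fin n) (p : Pn K n) : Pn K n :=
  (AddMonoidAlgebra.coeff p).sum fun m c => monomial (m + Finsupp.single k 1) (c / ((m k : K) + 1))

lemma pderiv_antid (k : Fin n) (p : Pn K n) : pderiv k (antid k p) = p := by
  classical
  rw [antid, MvPolynomial.sum_def, map_sum]
  conv_rhs => rw [(support_sum_monomial_coeff p).symm]
  apply Finset.sum_congr rfl
  intro m hm
  rw [pderiv_monomial, add_tsub_cancel_right]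
  congr 1
  rw [Finsupp.add_apply, Finsupp.single_eq_same]
  push_cast
  exact div_mul_cancel₀ _ (Nat.cast_add_one_ne_zero (m k))

lemma monomial_mem_Psub {j : ℕ} (d : Fin n →₀ ℕ) (c : K)
    (hd : ∀ a ∈ d.support, (a : ℕ) < j) : (monomial d c : Pn K n) ∈ Psub K n j := by
  by_cases hc : c = 0
  · rw [hc, monomial_zero]; exact (Psub K n j).zero_mem
  · rw [Psub, mem_supported, vars_monomial hc]
    intro a ha
    exact hd a (Finset.mem_coe.mp ha)

lemma antid_mem_Psub {k : Fin n} {j : ℕ} (hk : (k : ℕ) < j) {p : Pn K n}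
    (hp : p ∈ Psub K n j) : antid k p ∈ Psub K n j := by
  classical
  rw [antid, MvPolynomial.sum_def]
  apply Subalgebra.sum_mem
  intro m hm
  apply monomial_mem_Psub
  intro a ha
  have h2 := Finsupp.support_add ha
  rw [Finset.mem_union] at h2
  rcases h2 with h | h
  · exact (mem_supported.mp hp) ((mem_vars a).mpr ⟨m, hm, h⟩)
  · have : a = k := by simpa using Finsupp.support_single_subset h
    subst this; exact hk

lemma smul_pderiv_mem_U {j : Fin n} {f : Pn K n} (hf : f ∈ Psub K n j) :
    f • (pderiv j : DerPn K n) ∈ U K n 1 := by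
  intro m
  refine ⟨?_, fun h => by omega⟩
  rw [Derivation.smul_apply, smul_eq_mul]
  by_cases h : j = m
  · subst h; rw [pderiv_X_self, mul_one]; exact hf
  · rw [pderiv_X_of_ne (fun hh => h hh.symm), mul_zero]
    exact (Psub K n m).zero_mem

lemma smul_pderiv_mem_derivedSub :
    ∀ k : ℕ, ∀ j : Fin n, k ≤ (j : ℕ) → ∀ f ∈ Psub K n (j : ℕ),
      f • (pderiv j : DerPn K n) ∈ derivedSub K n (U K n 1) k
  | 0 => fun j _ f hf => smul_pderiv_mem_U hf
  | (k + 1) => by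
      intro j hj f hf
      have hkn : k < n := lt_of_lt_of_le (Nat.lt_of_lt_of_le (Nat.lt_succ_self k) hj) (Nat.le_of_lt j.isLt)
      set a : Fin n := ⟨k, hkn⟩ with ha
      have hak : (a : ℕ) = k := rfl
      have h1 : (pderiv a : DerPn K n) ∈ derivedSub K n (U K n 1) k := by
        have := smul_pderiv_mem_derivedSub k a (le_of_eq hak.symm) 1 (Subalgebra.one_mem _)
        rwa [one_smul] at this
      have h2 : (antid a f) • (pderiv j : DerPn K n) ∈ derivedSub K n (U K n 1) k :=
        smul_pderiv_mem_derivedSub k j (le_of_lt (Nat.lt_of_lt_of_le (Nat.lt_succ_self k) hj)) _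
          (antid_mem_Psub (by omega) hf)
      have hb : f • (pderiv j : DerPn K n) =
          ⁅(pderiv a : DerPn K n), (antid a f) • (pderiv j : DerPn K n)⁆ := by
        rw [bracket_pderiv_smul, pderiv_antid]
      rw [hb]
      exact Submodule.subset_span ⟨_, h1, _, h2, rfl⟩

lemma mem_derivedSub_one {w : DerPn K n} (hw : w ∈ U K n 2) :
    w ∈ derivedSub K n (U K n 1) 1 := by
  classical
  have hsum : w = ∑ j : Fin n, w (X j) • (pderiv j : DerPn K n) := by
    apply derivation_ext
    intro m
    have happ : (∑ j : Fin n, w (X j) • (pderiv j : DerPn K n)) (X m)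
        = ∑ j : Fin n, (w (X j) • (pderiv j : DerPn K n)) (X m) := by
      induction (Finset.univ : Finset (Fin n)) using Finset.induction with
      | empty => simp
      | insert _ _ hne ih =>
          rw [Finset.sum_insert hne, Finset.sum_insert hne, Derivation.add_apply, ih]
    rw [happ]
    rw [Finset.sum_eq_single m]
    · rw [Derivation.smul_apply, smul_eq_mul, pderiv_X_self, mul_one]
    · intro b _ hb
      rw [Derivation.smul_apply, smul_eq_mul, pderiv_X_of_ne (Ne.symm hb), mul_zero]
    · intro h; exact absurd (Finset.mem_univ m) h
  rw [hsum]
  apply Submodule.sum_mem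
  intro j _
  by_cases hj : (j : ℕ) = 0
  · have : w (X j) = 0 := (hw j).2 (by omega)
    rw [this, zero_smul]; exact Submodule.zero_mem _
  · exact smul_pderiv_mem_derivedSub 1 j (by omega) _ (hw j).1

lemma Psub_zero_eq_bot : Psub K n 0 = ⊥ := by
  rw [Psub]
  have : {k : Fin n | (k : ℕ) < 0} = (∅ : Set (Fin n)) := by ext k; simp
  rw [this, supported_empty]

lemma key (K : Type) [Field K] [CharZero K] (n : ℕ) (hn : 2 ≤ n)
    (L : LieSubalgebra K (DerPn K n)) (hL : L.toSubmodule = U K n 1)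
    (φ : L →ₗ⁅K⁆ L) (hφ : Function.Injective φ)
    (i : Fin n) (hi : (i : ℕ) = 0) (d : L) (hd : (d : DerPn K n) = pderiv i)
    (hc2 : ((φ d : L) : DerPn K n) ∈ U K n 2) : False := by
  classical
  have hadd : ∀ x y : L, ((x + y : L) : DerPn K n) = (x : DerPn K n) + y := fun _ _ => rfl
  have hsmul : ∀ (c : K) (x : L), ((c • x : L) : DerPn K n) = c • (x : DerPn K n) :=
    fun _ _ => rfl
  have hLmem : ∀ x : DerPn K n, x ∈ U K n 1 → x ∈ L := by
    intro x hx
    rw [← LieSubalgebra.mem_toSubmodule, hL]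
    exact hx
  have hLmem' : ∀ x : L, (x : DerPn K n) ∈ U K n 1 := by
    intro x
    rw [← hL]
    exact x.2
  -- A: φ maps U2 ∩ L into U2
  have hA : ∀ x : DerPn K n, x ∈ U K n 2 → ∀ hxL : x ∈ L,
      ((φ ⟨x, hxL⟩ : L) : DerPn K n) ∈ U K n 2 := by
    intro x hx
    have hx1 : x ∈ Submodule.span K
        {y : DerPn K n | ∃ a ∈ U K n 1, ∃ b ∈ U K n 1, y = ⁅a, b⁆} :=
      mem_derivedSub_one hx
    have hspan_le : Submodule.span K
        {y : DerPn K n | ∃ a ∈ U K n 1, ∃ b ∈ U K n 1, y = ⁅a, b⁆} ≤ U K n 1 := by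
      have h1 : derivedSub K n (U K n 1) 1 ≤ U K n (1 + 1) :=
        derivedSub_le_U (le_refl _) 1
      exact le_trans h1 (U_mono one_le_two)
    clear hx
    induction hx1 using Submodule.span_induction with
    | mem y hy =>
        obtain ⟨a, ha, b, hb, rfl⟩ := hy
        intro hxL
        have haL : a ∈ L := hLmem a ha
        have hbL : b ∈ L := hLmem b hb
        have he : (⟨⁅a, b⁆, hxL⟩ : L) = ⁅(⟨a, haL⟩ : L), (⟨b, hbL⟩ : L)⁆ :=
          Subtype.ext (by rw [LieSubalgebra.coe_bracket])
        rw [he, LieHom.map_lie, LieSubalgebra.coe_bracket]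
        have := bracket_mem_U (i := 1) (hLmem' (φ ⟨a, haL⟩)) (hLmem' (φ ⟨b, hbL⟩))
        exact this
    | zero =>
        intro h0L
        have : (⟨(0 : DerPn K n), h0L⟩ : L) = 0 := Subtype.ext rfl
        rw [this, map_zero φ]
        exact Submodule.zero_mem _
    | add x y hx hy ihx ihy =>
        intro hxyL
        have hxL : x ∈ L := hLmem x (hspan_le hx)
        have hyL : y ∈ L := hLmem y (hspan_le hy)
        have he : (⟨x + y, hxyL⟩ : L) = ⟨x, hxL⟩ + ⟨y, hyL⟩ := Subtype.ext rfl
        rw [he, map_add φ, hadd]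
        exact Submodule.add_mem _ (ihx hxL) (ihy hyL)
    | smul c x hx ihx =>
        intro hcxL
        have hxL : x ∈ L := hLmem x (hspan_le hx)
        have he : (⟨c • x, hcxL⟩ : L) = c • ⟨x, hxL⟩ := Subtype.ext rfl
        rw [he, map_smul φ, hsmul]
        exact Submodule.smul_mem _ c (ihx hxL)
  -- Q: φ maps derivedSub (U1) k ∩ L into derivedSub (U2) k
  have hQ : ∀ k : ℕ, ∀ x : DerPn K n, x ∈ derivedSub K n (U K n 1) k →
      ∀ hxL : x ∈ L, ((φ ⟨x, hxL⟩ : L) : DerPn K n) ∈ derivedSub K n (U K n 2) k := by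
    intro k
    induction k with
    | zero =>
        intro x hx hxL
        -- decompose x = c • pderiv i + w
        have h0 : x (X i) ∈ Psub K n 0 := by
          have := (hx i).1
          rwa [hi] at this
        rw [Psub_zero_eq_bot, Algebra.mem_bot] at h0
        obtain ⟨c, hc⟩ := h0
        rw [MvPolynomial.algebraMap_eq] at hc
        set w : DerPn K n := x - c • pderiv i with hwdef
        have hpx : ∀ j : Fin n, w (X j) = x (X j) - c • (pderiv i) (X j) := fun j => rfl
        have hw : w ∈ U K n 2 := by
          intro j
          by_cases hij : i = j
          · subst hij
            have hwz : w (X i) = 0 := by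
              rw [hpx, pderiv_X_self, smul_eq_C_mul, mul_one, ← hc, sub_self]
            exact ⟨by rw [hwz]; exact (Psub K n i).zero_mem, fun _ => hwz⟩
          · have : w (X j) = x (X j) := by
              rw [hpx, pderiv_X_of_ne (fun hh => hij hh.symm), smul_zero, sub_zero]
            refine ⟨by rw [this]; exact (hx j).1, fun hj => ?_⟩
            exfalso
            exact hij (Fin.ext (by omega))
        have hwL : w ∈ L := hLmem w (U_mono one_le_two hw)
        have he : (⟨x, hxL⟩ : L) = c • d + ⟨w, hwL⟩ := by
          apply Subtype.ext
          rw [hadd, hsmul, hd]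
          show x = c • pderiv i + w
          rw [hwdef]
          abel
        rw [show derivedSub K n (U K n 2) 0 = U K n 2 from rfl, he, map_add φ, map_smul φ,
          hadd, hsmul]
        exact Submodule.add_mem _ (Submodule.smul_mem _ c hc2) (hA w hw hwL)
    | succ k ih =>
        intro x hx
        have hxspan : x ∈ Submodule.span K
            {y : DerPn K n | ∃ a ∈ derivedSub K n (U K n 1) k,
              ∃ b ∈ derivedSub K n (U K n 1) k, y = ⁅a, b⁆} := hx
        have hle : derivedSub K n (U K n 1) k ≤ U K n 1 :=
          le_trans (derivedSub_le_U (le_refl _) k) (U_mono (Nat.le_add_right 1 k))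
        have hspan_le : Submodule.span K
            {y : DerPn K n | ∃ a ∈ derivedSub K n (U K n 1) k,
              ∃ b ∈ derivedSub K n (U K n 1) k, y = ⁅a, b⁆} ≤ U K n 1 := by
          have h1 : derivedSub K n (U K n 1) (k + 1) ≤ U K n (1 + (k + 1)) :=
            derivedSub_le_U (le_refl _) (k + 1)
          exact le_trans h1 (U_mono (Nat.le_add_right 1 (k + 1)))
        clear hx
        induction hxspan using Submodule.span_induction with
        | mem y hy =>
            obtain ⟨a, ha, b, hb, rfl⟩ := hy
            intro hxL
            have haL : a ∈ L := hLmem a (hle ha)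
            have hbL : b ∈ L := hLmem b (hle hb)
            have he : (⟨⁅a, b⁆, hxL⟩ : L) = ⁅(⟨a, haL⟩ : L), (⟨b, hbL⟩ : L)⁆ :=
              Subtype.ext (by rw [LieSubalgebra.coe_bracket])
            rw [he, LieHom.map_lie, LieSubalgebra.coe_bracket]
            exact Submodule.subset_span ⟨_, ih a ha haL, _, ih b hb hbL, rfl⟩
        | zero =>
            intro h0L
            have : (⟨(0 : DerPn K n), h0L⟩ : L) = 0 := Subtype.ext rfl
            rw [this, map_zero φ]
            exact Submodule.zero_mem _
        | add x y hx hy ihx ihy =>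
            intro hxyL
            have hxL : x ∈ L := hLmem x (hspan_le hx)
            have hyL : y ∈ L := hLmem y (hspan_le hy)
            have he : (⟨x + y, hxyL⟩ : L) = ⟨x, hxL⟩ + ⟨y, hyL⟩ := Subtype.ext rfl
            rw [he, map_add φ, hadd]
            exact Submodule.add_mem _ (ihx hxL) (ihy hyL)
        | smul c x hx ihx =>
            intro hcxL
            have hxL : x ∈ L := hLmem x (hspan_le hx)
            have he : (⟨c • x, hcxL⟩ : L) = c • ⟨x, hxL⟩ := Subtype.ext rfl
            rw [he, map_smul φ, hsmul]
            exact Submodule.smul_mem _ c (ihx hxL)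
  -- conclude
  set lst : Fin n := ⟨n - 1, by omega⟩ with hlst
  have hx0 : (pderiv lst : DerPn K n) ∈ derivedSub K n (U K n 1) (n - 1) := by
    have := smul_pderiv_mem_derivedSub (n - 1) lst (le_refl _) 1 ((Psub K n ((lst : Fin n) : ℕ)).one_mem)
    rwa [one_smul] at this
  have hx0L : (pderiv lst : DerPn K n) ∈ L :=
    hLmem _ (U_mono (Nat.le_add_right 1 (n - 1)) (derivedSub_le_U (le_refl _) (n - 1) hx0))
  have hφ0 : ((φ ⟨pderiv lst, hx0L⟩ : L) : DerPn K n) ∈ derivedSub K n (U K n 2) (n - 1) :=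
    hQ (n - 1) _ hx0 hx0L
  have hval : ((φ ⟨pderiv lst, hx0L⟩ : L) : DerPn K n) ∈ U K n (n + 1) := by
    have h1 := derivedSub_le_U (le_refl (U K n 2)) (n - 1) hφ0
    have h2 : 2 + (n - 1) = n + 1 := by omega
    rwa [h2] at h1
  have hz : ((φ ⟨pderiv lst, hx0L⟩ : L) : DerPn K n) = 0 := eq_zero_of_mem_U hval
  have hz' : φ ⟨pderiv lst, hx0L⟩ = 0 := Subtype.ext hz
  have : (⟨pderiv lst, hx0L⟩ : L) = 0 := hφ (by rw [hz', map_zero φ])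
  have hcontra : (pderiv lst : DerPn K n) = 0 := congrArg Subtype.val this
  have : (pderiv lst : DerPn K n) (X lst) = 0 := by rw [hcontra]; rfl
  rw [pderiv_X_self] at this
  exact one_ne_zero this

/-- if `φ : u_n → u_n` is an injective Lie algebra homomorphism then
`φ(∂₁) = λ∂₁ + u` for some `λ ∈ K*` and `u ∈ u_{n,2}`. -/
theorem phi_d1 (K : Type) [Field K] [CharZero K] (n : ℕ) (hn : 2 ≤ n)
    (L : LieSubalgebra K (DerPn K n)) (hL : L.toSubmodule = U K n 1)
    (φ : L →ₗ⁅K⁆ L) (hφ : Function.Injective φ)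
    (i : Fin n) (hi : (i : ℕ) = 0) (d : L) (hd : (d : DerPn K n) = pderiv i) :
    ∃ lam : K, lam ≠ 0 ∧ ∃ u : DerPn K n, u ∈ U K n 2 ∧
      ((φ d : L) : DerPn K n) = lam • pderiv i + u := by
  classical
  set x : DerPn K n := ((φ d : L) : DerPn K n) with hx
  have hxU : x ∈ U K n 1 := by
    rw [← hL]
    exact (φ d).2
  have h0 : x (X i) ∈ Psub K n 0 := by
    have := (hxU i).1
    rwa [hi] at this
  rw [Psub_zero_eq_bot, Algebra.mem_bot] at h0
  obtain ⟨c, hc⟩ := h0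
  rw [MvPolynomial.algebraMap_eq] at hc
  set w : DerPn K n := x - c • pderiv i with hwdef
  have hpx : ∀ j : Fin n, w (X j) = x (X j) - c • (pderiv i) (X j) := fun j => rfl
  have hw : w ∈ U K n 2 := by
    intro j
    by_cases hij : i = j
    · subst hij
      have hwz : w (X i) = 0 := by
        rw [hpx, pderiv_X_self, smul_eq_C_mul, mul_one, ← hc, sub_self]
      exact ⟨by rw [hwz]; exact (Psub K n i).zero_mem, fun _ => hwz⟩
    · have hwj : w (X j) = x (X j) := by
        rw [hpx, pderiv_X_of_ne (fun hh => hij hh.symm), smul_zero, sub_zero]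
      refine ⟨by rw [hwj]; exact (hxU j).1, fun hj => ?_⟩
      exfalso
      exact hij (Fin.ext (by omega))
  have heq : x = c • pderiv i + w := by rw [hwdef]; abel
  refine ⟨c, ?_, w, hw, heq⟩
  intro hc0
  apply key K n hn L hL φ hφ i hi d hd
  rw [← hx, heq, hc0, zero_smul, zero_add]
  exact hw
end
end

section
/- For 1 ≤ i ≤ n, the subspace G = K∂ᵢ + u_{n,i+1} is a Lie subalgebra of u_n, and its derived length equals n − i + 1. -/
open MvPolynomial

noncomputable section

lemma mem_U_iff {K : Type} [Field K] {n i : ℕ} {D : DerPn K n} :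
    D ∈ U K n i ↔ ∀ j : Fin n, D (X j) ∈ Psub K n j ∧ ((j : ℕ) + 1 < i → D (X j) = 0) :=
  Iff.rfl

lemma Psub_mono_s11 {K : Type} [Field K] {n a b : ℕ} (h : a ≤ b) : Psub K n a ≤ Psub K n b :=
  MvPolynomial.supported_mono (fun k hk => lt_of_lt_of_le hk h)

lemma der_mem_Psub {K : Type} [Field K] {n : ℕ} (D : DerPn K n) (j : ℕ)
    (h : ∀ k : Fin n, (k:ℕ) < j → D (X k) ∈ Psub K n j)
    {p : Pn K n} (hp : p ∈ Psub K n j) : D p ∈ Psub K n j := by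
  rw [Psub, supported_eq_adjoin_X] at hp
  induction hp using Algebra.adjoin_induction with
  | mem x hx => obtain ⟨k, hk, rfl⟩ := hx; exact h k hk
  | algebraMap r => rw [Derivation.map_algebraMap]; exact (Psub K n j).zero_mem
  | add x y hx hy ihx ihy => rw [map_add]; exact (Psub K n j).add_mem ihx ihy
  | mul x y hx hy ihx ihy =>
      rw [Derivation.leibniz, smul_eq_mul, smul_eq_mul]
      have hx' : x ∈ Psub K n j := by rwa [Psub, supported_eq_adjoin_X]
      have hy' : y ∈ Psub K n j := by rwa [Psub, supported_eq_adjoin_X]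
      exact (Psub K n j).add_mem ((Psub K n j).mul_mem hx' ihy) ((Psub K n j).mul_mem hy' ihx)

lemma der_zero_Psub {K : Type} [Field K] {n : ℕ} (D : DerPn K n) (j : ℕ)
    (h : ∀ k : Fin n, (k:ℕ) < j → D (X k) = 0)
    {p : Pn K n} (hp : p ∈ Psub K n j) : D p = 0 := by
  rw [Psub, supported_eq_adjoin_X] at hp
  induction hp using Algebra.adjoin_induction with
  | mem x hx => obtain ⟨k, hk, rfl⟩ := hx; exact h k hk
  | algebraMap r => rw [Derivation.map_algebraMap]
  | add x y hx hy ihx ihy => rw [map_add, ihx, ihy, add_zero]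
  | mul x y hx hy ihx ihy => rw [Derivation.leibniz, ihx, ihy, smul_zero, smul_zero, add_zero]

lemma bracket_mem_U_s11 {K : Type} [Field K] {n k : ℕ} {D E : DerPn K n}
    (hD : D ∈ U K n k) (hE : E ∈ U K n k) : ⁅D, E⁆ ∈ U K n (k + 1) := by
  rw [mem_U_iff] at hD hE ⊢
  intro j
  constructor
  · rw [Derivation.commutator_apply]
    refine (Psub K n (j:ℕ)).sub_mem ?_ ?_
    · exact der_mem_Psub D j (fun m hm => Psub_mono_s11 (by omega) (hD m).1) (hE j).1
    · exact der_mem_Psub E j (fun m hm => Psub_mono_s11 (by omega) (hE m).1) (hD j).1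
  · intro hj
    rw [Derivation.commutator_apply]
    have h1 : D (E (X j)) = 0 :=
      der_zero_Psub D j (fun m hm => (hD m).2 (by omega)) (hE j).1
    have h2 : E (D (X j)) = 0 :=
      der_zero_Psub E j (fun m hm => (hE m).2 (by omega)) (hD j).1
    rw [h1, h2, sub_zero]

lemma U_antitone {K : Type} [Field K] {n a b : ℕ} (h : a ≤ b) : U K n b ≤ U K n a := by
  intro D hD
  rw [mem_U_iff] at hD ⊢
  exact fun j => ⟨(hD j).1, fun hj => (hD j).2 (by omega)⟩

lemma pderiv_mem_U {K : Type} [Field K] {n k : ℕ} (idx : Fin n) (hk : k ≤ (idx:ℕ) + 1) :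
    (pderiv idx : DerPn K n) ∈ U K n k := by
  rw [mem_U_iff]
  intro j
  constructor
  · by_cases hj : j = idx
    · subst hj; rw [pderiv_X_self]; exact (Psub K n (j:ℕ)).one_mem
    · rw [pderiv_X_of_ne hj]; exact (Psub K n (j:ℕ)).zero_mem
  · intro hj
    exact pderiv_X_of_ne (by intro h; subst h; omega)

/-- exponent vector: 1 on `[a,b)`, else 0 -/
def ee (n a b : ℕ) : Fin n →₀ ℕ :=
  Finsupp.equivFunOnFinite.symm (fun l => if a ≤ (l:ℕ) ∧ (l:ℕ) < b then 1 else 0)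

lemma ee_apply {n a b : ℕ} (l : Fin n) :
    ee n a b l = if a ≤ (l:ℕ) ∧ (l:ℕ) < b then 1 else 0 := rfl

/-- the derivation `x_a x_{a+1} ⋯ x_{k-1} ∂_k` -/
def Dab (K : Type) [Field K] (n : ℕ) (a : ℕ) (k : Fin n) : DerPn K n :=
  (monomial (ee n a k) (1:K)) • pderiv k

lemma Dab_apply {K : Type} [Field K] {n a : ℕ} {k : Fin n} (q : Pn K n) :
    (Dab K n a k) q = monomial (ee n a k) (1:K) * pderiv k q := by
  rw [Dab, Derivation.smul_apply, smul_eq_mul]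

lemma Dab_eq_pderiv {K : Type} [Field K] {n a : ℕ} {k : Fin n} (h : (k:ℕ) ≤ a) :
    Dab K n a k = pderiv k := by
  have he : ee n a k = 0 := by
    ext l
    rw [ee_apply]
    simp only [Finsupp.coe_zero, Pi.zero_apply, ite_eq_right_iff]
    omega
  rw [Dab, he, monomial_zero', C_1, one_smul]

lemma monomial_ee_mem {K : Type} [Field K] {n a b : ℕ} :
    (monomial (ee n a b) (1:K) : Pn K n) ∈ Psub K n b := by
  rw [Psub, mem_supported, vars_monomial one_ne_zero]
  intro l hl
  simp only [Finset.mem_coe, Finsupp.mem_support_iff, ee_apply] at hl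
  simp only [Set.mem_setOf_eq]
  by_contra h
  exact hl (by rw [if_neg]; omega)

lemma Dab_mem_U {K : Type} [Field K] {n a c : ℕ} {k : Fin n} (hc : c ≤ (k:ℕ) + 1) :
    Dab K n a k ∈ U K n c := by
  rw [mem_U_iff]
  intro j
  constructor
  · by_cases hj : j = k
    · subst hj
      rw [Dab_apply, pderiv_X_self, mul_one]
      exact monomial_ee_mem
    · rw [Dab_apply, pderiv_X_of_ne hj, mul_zero]
      exact (Psub K n (j:ℕ)).zero_mem
  · intro hj
    rw [Dab_apply, pderiv_X_of_ne (by intro h; subst h; omega), mul_zero]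

lemma ee_sub_single {n a b : ℕ} (jf : Fin n) (hj : (jf:ℕ) = a) (hab : a < b) :
    ee n a b - Finsupp.single jf 1 = ee n (a+1) b := by
  ext l
  rw [Finsupp.tsub_apply, ee_apply, ee_apply, Finsupp.single_apply]
  by_cases hl : jf = l
  · subst hl
    rw [if_pos (show a ≤ (jf:ℕ) ∧ (jf:ℕ) < b by omega), if_pos rfl,
      if_neg (show ¬(a + 1 ≤ (jf:ℕ) ∧ (jf:ℕ) < b) by omega)]
  · have hne : (l:ℕ) ≠ a := fun h => hl (Fin.ext (by omega))
    rw [if_neg hl, Nat.sub_zero]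
    exact if_congr (by omega) rfl rfl

lemma bracket_Dab {K : Type} [Field K] {n : ℕ} (jf k : Fin n) (hjk : (jf:ℕ) < (k:ℕ)) :
    ⁅(pderiv jf : DerPn K n), Dab K n (jf:ℕ) k⁆ = Dab K n ((jf:ℕ)+1) k := by
  have hne : k ≠ jf := by intro h; subst h; omega
  apply derivation_ext
  intro l
  rw [Derivation.commutator_apply, Dab_apply, Dab_apply, Dab_apply]
  by_cases hl : l = k
  · subst hl
    rw [pderiv_X_self, mul_one, pderiv_X_of_ne hne, map_zero, mul_zero, sub_zero,
      pderiv_monomial, ee_sub_single jf rfl hjk]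
    have h1 : ee n (jf:ℕ) (l:ℕ) jf = 1 := by
      rw [ee_apply, if_pos ⟨le_refl _, hjk⟩]
    rw [h1, mul_one]
    norm_num
  · rw [pderiv_X_of_ne hl, mul_zero, mul_zero, map_zero, zero_sub, neg_eq_zero]
    by_cases hlj : l = jf
    · subst hlj
      rw [pderiv_X_self, Derivation.map_one_eq_zero, mul_zero]
    · rw [pderiv_X_of_ne hlj, map_zero, mul_zero]

/-- `G = K∂ᵢ + u_{n,i+1}` is a Lie subalgebra of `u_n`, of derived
length exactly `n - i + 1`. -/
theorem G_subalgebra_derived_length (K : Type) [Field K] [CharZero K] (n : ℕ) (hn : 2 ≤ n)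
    (i : ℕ) (h1 : 1 ≤ i) (h2 : i ≤ n) (idx : Fin n) (hidx : (idx : ℕ) = i - 1) :
    (Submodule.span K {pderiv idx} ⊔ U K n (i + 1) ≤ U K n 1) ∧
    (∀ a ∈ Submodule.span K {pderiv idx} ⊔ U K n (i + 1),
      ∀ b ∈ Submodule.span K {pderiv idx} ⊔ U K n (i + 1),
        ⁅a, b⁆ ∈ Submodule.span K {pderiv idx} ⊔ U K n (i + 1)) ∧
    derivedSub K n (Submodule.span K {pderiv idx} ⊔ U K n (i + 1)) (n - i + 1) = ⊥ ∧
    derivedSub K n (Submodule.span K {pderiv idx} ⊔ U K n (i + 1)) (n - i) ≠ ⊥ := by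
  set G := Submodule.span K {pderiv idx} ⊔ U K n (i + 1) with hG
  have hGUi : G ≤ U K n i := by
    apply sup_le
    · rw [Submodule.span_le, Set.singleton_subset_iff]
      exact pderiv_mem_U idx (by omega)
    · exact U_antitone (by omega)
  have hder : ∀ m, derivedSub K n G m ≤ U K n (i + m) := by
    intro m
    induction m with
    | zero => simpa [derivedSub] using hGUi
    | succ m ih =>
      show lieSpan K n _ _ ≤ _
      rw [lieSpan, Submodule.span_le]
      rintro x ⟨a, ha, b, hb, rfl⟩
      exact bracket_mem_U_s11 (ih ha) (ih hb)
  refine ⟨le_trans hGUi (U_antitone h1), ?_, ?_, ?_⟩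
  · intro a ha b hb
    exact Submodule.mem_sup_right (bracket_mem_U_s11 (hGUi ha) (hGUi hb))
  · rw [eq_bot_iff]
    intro D hD
    have hD' := hder (n - i + 1) hD
    rw [mem_U_iff] at hD'
    rw [Submodule.mem_bot]
    apply derivation_ext
    intro j
    have hj := j.isLt
    have : D (X j) = 0 := (hD' j).2 (by omega)
    simpa using this
  · have hkey : ∀ m, m ≤ n - i → ∀ k : Fin n, (idx:ℕ) + m ≤ (k:ℕ) →
        Dab K n ((idx:ℕ) + m) k ∈ derivedSub K n G m := by
      intro m
      induction m with
      | zero =>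
        intro _ k hk
        show _ ∈ G
        by_cases hkeq : (k:ℕ) = (idx:ℕ)
        · have hkk : k = idx := Fin.ext hkeq
          subst hkk
          rw [Dab_eq_pderiv (by omega)]
          exact Submodule.mem_sup_left (Submodule.mem_span_singleton_self _)
        · exact Submodule.mem_sup_right (Dab_mem_U (by omega))
      | succ m ih =>
        intro hm k hk
        have hkn := k.isLt
        have hjn : (idx:ℕ) + m < n := by omega
        have h1' : (pderiv (⟨(idx:ℕ) + m, hjn⟩ : Fin n) : DerPn K n) ∈ derivedSub K n G m := by
          have := ih (by omega) ⟨(idx:ℕ) + m, hjn⟩ (le_refl _)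
          rwa [Dab_eq_pderiv (show ((⟨(idx:ℕ) + m, hjn⟩ : Fin n) : ℕ) ≤ (idx:ℕ) + m from le_refl _)] at this
        have h2' : Dab K n ((idx:ℕ) + m) k ∈ derivedSub K n G m := ih (by omega) k (by omega)
        have hb : ⁅(pderiv (⟨(idx:ℕ) + m, hjn⟩ : Fin n) : DerPn K n),
            Dab K n ((idx:ℕ) + m) k⁆ = Dab K n ((idx:ℕ) + m + 1) k :=
          bracket_Dab ⟨(idx:ℕ) + m, hjn⟩ k (by simpa using by omega)
        show _ ∈ lieSpan K n (derivedSub K n G m) (derivedSub K n G m)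
        exact Submodule.subset_span ⟨_, h1', _, h2', hb.symm⟩
    intro hbot
    have hlast : n - 1 < n := by omega
    have hmem := hkey (n - i) (le_refl _) ⟨n - 1, hlast⟩ (by simp; omega)
    rw [Dab_eq_pderiv (by simp; omega)] at hmem
    rw [hbot, Submodule.mem_bot] at hmem
    have hone : (pderiv (⟨n-1, hlast⟩ : Fin n) (X ⟨n-1, hlast⟩) : Pn K n) = 0 := by
      rw [hmem]; rfl
    rw [pderiv_X_self] at hone
    exact one_ne_zero hone
end
end
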